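/- Fix g > 0, Λ ≠ 0 and Y ∈ ℝ⁴, and define the BPST instanton potential A : ℝ⁴ → (Fin 4 → M₂(ℂ)) by A_n(y) := (2/(g·(‖y−Y‖²+Λ²))) · Σ_m (y−Y)_m · σ_{mn}, with field strength F_{mn}(y) := ∂_m A_n(y) − ∂_n A_m(y) + g·( A_m(y)·A_n(y) − A_n(y)·A_m(y) ), where ∂_m denotes the partial derivative in the m-th coordinate of ℝ⁴. Then F_{mn}(y) = (4Λ²/(g·(‖y−Y‖²+Λ²)²)) · σ_{mn} for all y ∈ ℝ⁴ and all m, n ∈ Fin 4; in particular F is self-dual: (1/2)·Σ_{k,l} ε(m,n,k,l)·F_{kl}(y) = F_{mn}(y). -/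

import Mathlib

open Matrix

/-- The Pauli matrices `T₁, T₂, T₃`. -/
noncomputable def pauliT : Fin 3 → Matrix (Fin 2) (Fin 2) ℂ :=
  ![!![0, 1; 1, 0], !![0, -Complex.I; Complex.I, 0], !![1, 0; 0, -1]]

/-- The quaternionic basis `σ = (i T₁, i T₂, i T₃, 1)`. -/
noncomputable def sigmaQ : Fin 4 → Matrix (Fin 2) (Fin 2) ℂ :=
  ![Complex.I • pauliT 0, Complex.I • pauliT 1, Complex.I • pauliT 2, 1]

/-- `σ̄_m = (σ_m)†`. -/
noncomputable def sigmaBarQ (m : Fin 4) : Matrix (Fin 2) (Fin 2) ℂ := (sigmaQ m)ᴴ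

/-- The Lorentz generators `σ_{mn} = (1/4)(σ_m σ̄_n − σ_n σ̄_m)`. -/
noncomputable def sigmaLor (m n : Fin 4) : Matrix (Fin 2) (Fin 2) ℂ :=
  (1 / 4 : ℂ) • (sigmaQ m * sigmaBarQ n - sigmaQ n * sigmaBarQ m)

/-- The totally antisymmetric symbol on `Fin 4`: `ε(m,n,k,l)` is the sign of the
permutation sending `(0,1,2,3)` to `(m,n,k,l)` when these are pairwise distinct,
and `0` otherwise (so `ε(0,1,2,3) = 1`). -/
noncomputable def eps4 (m n k l : Fin 4) : ℝ :=
  ∑ π : Equiv.Perm (Fin 4),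
    if π 0 = m ∧ π 1 = n ∧ π 2 = k ∧ π 3 = l then ((Equiv.Perm.sign π : ℤ) : ℝ) else 0

/-- The partial derivative in the `m`-th coordinate of `ℝ⁴` of a matrix-entry-valued
function. -/
noncomputable def pder (m : Fin 4) (f : (Fin 4 → ℝ) → ℂ) (y : Fin 4 → ℝ) : ℂ :=
  deriv (fun t : ℝ => f (Function.update y m t)) (y m)

/-- The BPST instanton potential
`A_n(y) = (2/(g(‖y−Y‖²+Λ²))) Σ_m (y−Y)_m σ_{mn}`. -/
noncomputable def bpstA (g Λ : ℝ) (Y : Fin 4 → ℝ) (y : Fin 4 → ℝ) (n : Fin 4) :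
    Matrix (Fin 2) (Fin 2) ℂ :=
  (2 / (g * ((∑ m, (y m - Y m) ^ 2) + Λ ^ 2))) • ∑ m, (y m - Y m) • sigmaLor m n

/-- The field strength `F_{mn} = ∂_m A_n − ∂_n A_m + g [A_m, A_n]` of the BPST potential. -/
noncomputable def bpstF (g Λ : ℝ) (Y : Fin 4 → ℝ) (y : Fin 4 → ℝ) (m n : Fin 4) :
    Matrix (Fin 2) (Fin 2) ℂ :=
  (Matrix.of fun i j : Fin 2 =>
      pder m (fun z => bpstA g Λ Y z n i j) y - pder n (fun z => bpstA g Λ Y z m i j) y)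
    + g • (bpstA g Λ Y y m * bpstA g Λ Y y n - bpstA g Λ Y y n * bpstA g Λ Y y m)



section BPSTAux

set_option linter.unreachableTactic false
set_option linter.unusedTactic false

noncomputable def S1 : Matrix (Fin 2) (Fin 2) ℂ := !![0, Complex.I/2; Complex.I/2, 0]
noncomputable def S2 : Matrix (Fin 2) (Fin 2) ℂ := !![0, 1/2; -(1/2), 0]
noncomputable def S3 : Matrix (Fin 2) (Fin 2) ℂ := !![Complex.I/2, 0; 0, -(Complex.I/2)]

lemma sL_anti (m n : Fin 4) : sigmaLor n m = -sigmaLor m n := by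
  unfold sigmaLor; ext i j
  simp [Matrix.smul_apply, Matrix.sub_apply]; ring

lemma sL_self (m : Fin 4) : sigmaLor m m = 0 := by
  have h := sL_anti m m
  rw [eq_neg_iff_add_eq_zero] at h
  have h2 : (2 : ℂ) • sigmaLor m m = 0 := by rw [two_smul]; exact h
  simpa using h2

set_option maxHeartbeats 1000000 in
lemma sLtab : sigmaLor 0 1 = S3 ∧ sigmaLor 0 2 = -S2 ∧ sigmaLor 0 3 = S1 ∧
    sigmaLor 1 2 = S1 ∧ sigmaLor 1 3 = S2 ∧ sigmaLor 2 3 = S3 := by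
  refine ⟨?_, ?_, ?_, ?_, ?_, ?_⟩ <;>
    (ext i j; fin_cases i <;> fin_cases j <;>
      simp [sigmaLor, sigmaQ, sigmaBarQ, pauliT, S1, S2, S3, Matrix.mul_apply,
        Matrix.vecMul, dotProduct, Fin.sum_univ_two, Matrix.conjTranspose_apply] <;>
      ring)

lemma e01 : sigmaLor 0 1 = S3 := sLtab.1
lemma e02 : sigmaLor 0 2 = -S2 := sLtab.2.1
lemma e03 : sigmaLor 0 3 = S1 := sLtab.2.2.1
lemma e12 : sigmaLor 1 2 = S1 := sLtab.2.2.2.1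
lemma e13 : sigmaLor 1 3 = S2 := sLtab.2.2.2.2.1
lemma e23 : sigmaLor 2 3 = S3 := sLtab.2.2.2.2.2
lemma e10 : sigmaLor 1 0 = -S3 := by rw [sL_anti, e01]
lemma e20 : sigmaLor 2 0 = S2 := by rw [sL_anti, e02, neg_neg]
lemma e30 : sigmaLor 3 0 = -S1 := by rw [sL_anti, e03]
lemma e21 : sigmaLor 2 1 = -S1 := by rw [sL_anti, e12]
lemma e31 : sigmaLor 3 1 = -S2 := by rw [sL_anti, e13]
lemma e32 : sigmaLor 3 2 = -S3 := by rw [sL_anti, e23]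

lemma p11 : S1 * S1 = (-(1/4) : ℝ) • 1 := by
  ext i j; fin_cases i <;> fin_cases j <;>
    simp [S1, Matrix.mul_apply, Fin.sum_univ_two, Matrix.one_apply, Complex.ext_iff] <;> norm_num
lemma p22 : S2 * S2 = (-(1/4) : ℝ) • 1 := by
  ext i j; fin_cases i <;> fin_cases j <;>
    simp [S2, Matrix.mul_apply, Fin.sum_univ_two, Matrix.one_apply, Complex.ext_iff] <;> norm_num
lemma p33 : S3 * S3 = (-(1/4) : ℝ) • 1 := by
  ext i j; fin_cases i <;> fin_cases j <;>
    simp [S3, Matrix.mul_apply, Fin.sum_univ_two, Matrix.one_apply, Complex.ext_iff] <;> norm_num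
lemma p12 : S1 * S2 = (-(1/2) : ℝ) • S3 := by
  ext i j; fin_cases i <;> fin_cases j <;>
    simp [S1, S2, S3, Matrix.mul_apply, Fin.sum_univ_two, Complex.ext_iff] <;> norm_num
lemma p21 : S2 * S1 = ((1/2) : ℝ) • S3 := by
  ext i j; fin_cases i <;> fin_cases j <;>
    simp [S1, S2, S3, Matrix.mul_apply, Fin.sum_univ_two, Complex.ext_iff] <;> norm_num
lemma p23 : S2 * S3 = (-(1/2) : ℝ) • S1 := by
  ext i j; fin_cases i <;> fin_cases j <;>
    simp [S1, S2, S3, Matrix.mul_apply, Fin.sum_univ_two, Complex.ext_iff] <;> norm_num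
lemma p32 : S3 * S2 = ((1/2) : ℝ) • S1 := by
  ext i j; fin_cases i <;> fin_cases j <;>
    simp [S1, S2, S3, Matrix.mul_apply, Fin.sum_univ_two, Complex.ext_iff] <;> norm_num
lemma p31 : S3 * S1 = (-(1/2) : ℝ) • S2 := by
  ext i j; fin_cases i <;> fin_cases j <;>
    simp [S1, S2, S3, Matrix.mul_apply, Fin.sum_univ_two, Complex.ext_iff] <;> norm_num
lemma p13 : S1 * S3 = ((1/2) : ℝ) • S2 := by
  ext i j; fin_cases i <;> fin_cases j <;>
    simp [S1, S2, S3, Matrix.mul_apply, Fin.sum_univ_two, Complex.ext_iff] <;> norm_num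

set_option maxHeartbeats 800000 in
lemma cP00 (y Y : Fin 4 → ℝ) :
    (∑ k, (y k - Y k) • sigmaLor k 0) * (∑ k, (y k - Y k) • sigmaLor k 0)
      - (∑ k, (y k - Y k) • sigmaLor k 0) * (∑ k, (y k - Y k) • sigmaLor k 0)
    = (y 0 - Y 0) • (∑ k, (y k - Y k) • sigmaLor k 0)
      - (y 0 - Y 0) • (∑ k, (y k - Y k) • sigmaLor k 0)
      - (∑ k, (y k - Y k) ^ 2) • sigmaLor 0 0 := by
  simp [sL_self, sub_self]

set_option maxHeartbeats 800000 in
lemma cP01 (y Y : Fin 4 → ℝ) :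
    (∑ k, (y k - Y k) • sigmaLor k 0) * (∑ k, (y k - Y k) • sigmaLor k 1)
      - (∑ k, (y k - Y k) • sigmaLor k 1) * (∑ k, (y k - Y k) • sigmaLor k 0)
    = (y 0 - Y 0) • (∑ k, (y k - Y k) • sigmaLor k 1)
      - (y 1 - Y 1) • (∑ k, (y k - Y k) • sigmaLor k 0)
      - (∑ k, (y k - Y k) ^ 2) • sigmaLor 0 1 := by
  simp only [Fin.sum_univ_four, e01, e02, e03, e12, e13, e23, e10, e20, e30, e21, e31, e32,
    sL_self, smul_zero, add_zero, zero_add, smul_neg]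
  simp only [sub_mul, add_mul, mul_add, mul_sub, smul_mul_assoc, mul_smul_comm, smul_smul,
    p11, p22, p33, p12, p21, p23, p32, p31, p13, neg_mul, mul_neg, smul_neg, neg_smul, neg_neg]
  module

set_option maxHeartbeats 800000 in
lemma cP02 (y Y : Fin 4 → ℝ) :
    (∑ k, (y k - Y k) • sigmaLor k 0) * (∑ k, (y k - Y k) • sigmaLor k 2)
      - (∑ k, (y k - Y k) • sigmaLor k 2) * (∑ k, (y k - Y k) • sigmaLor k 0)
    = (y 0 - Y 0) • (∑ k, (y k - Y k) • sigmaLor k 2)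
      - (y 2 - Y 2) • (∑ k, (y k - Y k) • sigmaLor k 0)
      - (∑ k, (y k - Y k) ^ 2) • sigmaLor 0 2 := by
  simp only [Fin.sum_univ_four, e01, e02, e03, e12, e13, e23, e10, e20, e30, e21, e31, e32,
    sL_self, smul_zero, add_zero, zero_add, smul_neg]
  simp only [sub_mul, add_mul, mul_add, mul_sub, smul_mul_assoc, mul_smul_comm, smul_smul,
    p11, p22, p33, p12, p21, p23, p32, p31, p13, neg_mul, mul_neg, smul_neg, neg_smul, neg_neg]
  module

set_option maxHeartbeats 800000 in
lemma cP03 (y Y : Fin 4 → ℝ) :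
    (∑ k, (y k - Y k) • sigmaLor k 0) * (∑ k, (y k - Y k) • sigmaLor k 3)
      - (∑ k, (y k - Y k) • sigmaLor k 3) * (∑ k, (y k - Y k) • sigmaLor k 0)
    = (y 0 - Y 0) • (∑ k, (y k - Y k) • sigmaLor k 3)
      - (y 3 - Y 3) • (∑ k, (y k - Y k) • sigmaLor k 0)
      - (∑ k, (y k - Y k) ^ 2) • sigmaLor 0 3 := by
  simp only [Fin.sum_univ_four, e01, e02, e03, e12, e13, e23, e10, e20, e30, e21, e31, e32,
    sL_self, smul_zero, add_zero, zero_add, smul_neg]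
  simp only [sub_mul, add_mul, mul_add, mul_sub, smul_mul_assoc, mul_smul_comm, smul_smul,
    p11, p22, p33, p12, p21, p23, p32, p31, p13, neg_mul, mul_neg, smul_neg, neg_smul, neg_neg]
  module

set_option maxHeartbeats 800000 in
lemma cP10 (y Y : Fin 4 → ℝ) :
    (∑ k, (y k - Y k) • sigmaLor k 1) * (∑ k, (y k - Y k) • sigmaLor k 0)
      - (∑ k, (y k - Y k) • sigmaLor k 0) * (∑ k, (y k - Y k) • sigmaLor k 1)
    = (y 1 - Y 1) • (∑ k, (y k - Y k) • sigmaLor k 0)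
      - (y 0 - Y 0) • (∑ k, (y k - Y k) • sigmaLor k 1)
      - (∑ k, (y k - Y k) ^ 2) • sigmaLor 1 0 := by
  simp only [Fin.sum_univ_four, e01, e02, e03, e12, e13, e23, e10, e20, e30, e21, e31, e32,
    sL_self, smul_zero, add_zero, zero_add, smul_neg]
  simp only [sub_mul, add_mul, mul_add, mul_sub, smul_mul_assoc, mul_smul_comm, smul_smul,
    p11, p22, p33, p12, p21, p23, p32, p31, p13, neg_mul, mul_neg, smul_neg, neg_smul, neg_neg]
  module

set_option maxHeartbeats 800000 in
lemma cP11 (y Y : Fin 4 → ℝ) :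
    (∑ k, (y k - Y k) • sigmaLor k 1) * (∑ k, (y k - Y k) • sigmaLor k 1)
      - (∑ k, (y k - Y k) • sigmaLor k 1) * (∑ k, (y k - Y k) • sigmaLor k 1)
    = (y 1 - Y 1) • (∑ k, (y k - Y k) • sigmaLor k 1)
      - (y 1 - Y 1) • (∑ k, (y k - Y k) • sigmaLor k 1)
      - (∑ k, (y k - Y k) ^ 2) • sigmaLor 1 1 := by
  simp [sL_self, sub_self]

set_option maxHeartbeats 800000 in
lemma cP12 (y Y : Fin 4 → ℝ) :
    (∑ k, (y k - Y k) • sigmaLor k 1) * (∑ k, (y k - Y k) • sigmaLor k 2)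
      - (∑ k, (y k - Y k) • sigmaLor k 2) * (∑ k, (y k - Y k) • sigmaLor k 1)
    = (y 1 - Y 1) • (∑ k, (y k - Y k) • sigmaLor k 2)
      - (y 2 - Y 2) • (∑ k, (y k - Y k) • sigmaLor k 1)
      - (∑ k, (y k - Y k) ^ 2) • sigmaLor 1 2 := by
  simp only [Fin.sum_univ_four, e01, e02, e03, e12, e13, e23, e10, e20, e30, e21, e31, e32,
    sL_self, smul_zero, add_zero, zero_add, smul_neg]
  simp only [sub_mul, add_mul, mul_add, mul_sub, smul_mul_assoc, mul_smul_comm, smul_smul,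
    p11, p22, p33, p12, p21, p23, p32, p31, p13, neg_mul, mul_neg, smul_neg, neg_smul, neg_neg]
  module

set_option maxHeartbeats 800000 in
lemma cP13 (y Y : Fin 4 → ℝ) :
    (∑ k, (y k - Y k) • sigmaLor k 1) * (∑ k, (y k - Y k) • sigmaLor k 3)
      - (∑ k, (y k - Y k) • sigmaLor k 3) * (∑ k, (y k - Y k) • sigmaLor k 1)
    = (y 1 - Y 1) • (∑ k, (y k - Y k) • sigmaLor k 3)
      - (y 3 - Y 3) • (∑ k, (y k - Y k) • sigmaLor k 1)
      - (∑ k, (y k - Y k) ^ 2) • sigmaLor 1 3 := by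
  simp only [Fin.sum_univ_four, e01, e02, e03, e12, e13, e23, e10, e20, e30, e21, e31, e32,
    sL_self, smul_zero, add_zero, zero_add, smul_neg]
  simp only [sub_mul, add_mul, mul_add, mul_sub, smul_mul_assoc, mul_smul_comm, smul_smul,
    p11, p22, p33, p12, p21, p23, p32, p31, p13, neg_mul, mul_neg, smul_neg, neg_smul, neg_neg]
  module

set_option maxHeartbeats 800000 in
lemma cP20 (y Y : Fin 4 → ℝ) :
    (∑ k, (y k - Y k) • sigmaLor k 2) * (∑ k, (y k - Y k) • sigmaLor k 0)
      - (∑ k, (y k - Y k) • sigmaLor k 0) * (∑ k, (y k - Y k) • sigmaLor k 2)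
    = (y 2 - Y 2) • (∑ k, (y k - Y k) • sigmaLor k 0)
      - (y 0 - Y 0) • (∑ k, (y k - Y k) • sigmaLor k 2)
      - (∑ k, (y k - Y k) ^ 2) • sigmaLor 2 0 := by
  simp only [Fin.sum_univ_four, e01, e02, e03, e12, e13, e23, e10, e20, e30, e21, e31, e32,
    sL_self, smul_zero, add_zero, zero_add, smul_neg]
  simp only [sub_mul, add_mul, mul_add, mul_sub, smul_mul_assoc, mul_smul_comm, smul_smul,
    p11, p22, p33, p12, p21, p23, p32, p31, p13, neg_mul, mul_neg, smul_neg, neg_smul, neg_neg]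
  module

set_option maxHeartbeats 800000 in
lemma cP21 (y Y : Fin 4 → ℝ) :
    (∑ k, (y k - Y k) • sigmaLor k 2) * (∑ k, (y k - Y k) • sigmaLor k 1)
      - (∑ k, (y k - Y k) • sigmaLor k 1) * (∑ k, (y k - Y k) • sigmaLor k 2)
    = (y 2 - Y 2) • (∑ k, (y k - Y k) • sigmaLor k 1)
      - (y 1 - Y 1) • (∑ k, (y k - Y k) • sigmaLor k 2)
      - (∑ k, (y k - Y k) ^ 2) • sigmaLor 2 1 := by
  simp only [Fin.sum_univ_four, e01, e02, e03, e12, e13, e23, e10, e20, e30, e21, e31, e32,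
    sL_self, smul_zero, add_zero, zero_add, smul_neg]
  simp only [sub_mul, add_mul, mul_add, mul_sub, smul_mul_assoc, mul_smul_comm, smul_smul,
    p11, p22, p33, p12, p21, p23, p32, p31, p13, neg_mul, mul_neg, smul_neg, neg_smul, neg_neg]
  module

set_option maxHeartbeats 800000 in
lemma cP22 (y Y : Fin 4 → ℝ) :
    (∑ k, (y k - Y k) • sigmaLor k 2) * (∑ k, (y k - Y k) • sigmaLor k 2)
      - (∑ k, (y k - Y k) • sigmaLor k 2) * (∑ k, (y k - Y k) • sigmaLor k 2)
    = (y 2 - Y 2) • (∑ k, (y k - Y k) • sigmaLor k 2)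
      - (y 2 - Y 2) • (∑ k, (y k - Y k) • sigmaLor k 2)
      - (∑ k, (y k - Y k) ^ 2) • sigmaLor 2 2 := by
  simp [sL_self, sub_self]

set_option maxHeartbeats 800000 in
lemma cP23 (y Y : Fin 4 → ℝ) :
    (∑ k, (y k - Y k) • sigmaLor k 2) * (∑ k, (y k - Y k) • sigmaLor k 3)
      - (∑ k, (y k - Y k) • sigmaLor k 3) * (∑ k, (y k - Y k) • sigmaLor k 2)
    = (y 2 - Y 2) • (∑ k, (y k - Y k) • sigmaLor k 3)
      - (y 3 - Y 3) • (∑ k, (y k - Y k) • sigmaLor k 2)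
      - (∑ k, (y k - Y k) ^ 2) • sigmaLor 2 3 := by
  simp only [Fin.sum_univ_four, e01, e02, e03, e12, e13, e23, e10, e20, e30, e21, e31, e32,
    sL_self, smul_zero, add_zero, zero_add, smul_neg]
  simp only [sub_mul, add_mul, mul_add, mul_sub, smul_mul_assoc, mul_smul_comm, smul_smul,
    p11, p22, p33, p12, p21, p23, p32, p31, p13, neg_mul, mul_neg, smul_neg, neg_smul, neg_neg]
  module

set_option maxHeartbeats 800000 in
lemma cP30 (y Y : Fin 4 → ℝ) :
    (∑ k, (y k - Y k) • sigmaLor k 3) * (∑ k, (y k - Y k) • sigmaLor k 0)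
      - (∑ k, (y k - Y k) • sigmaLor k 0) * (∑ k, (y k - Y k) • sigmaLor k 3)
    = (y 3 - Y 3) • (∑ k, (y k - Y k) • sigmaLor k 0)
      - (y 0 - Y 0) • (∑ k, (y k - Y k) • sigmaLor k 3)
      - (∑ k, (y k - Y k) ^ 2) • sigmaLor 3 0 := by
  simp only [Fin.sum_univ_four, e01, e02, e03, e12, e13, e23, e10, e20, e30, e21, e31, e32,
    sL_self, smul_zero, add_zero, zero_add, smul_neg]
  simp only [sub_mul, add_mul, mul_add, mul_sub, smul_mul_assoc, mul_smul_comm, smul_smul,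
    p11, p22, p33, p12, p21, p23, p32, p31, p13, neg_mul, mul_neg, smul_neg, neg_smul, neg_neg]
  module

set_option maxHeartbeats 800000 in
lemma cP31 (y Y : Fin 4 → ℝ) :
    (∑ k, (y k - Y k) • sigmaLor k 3) * (∑ k, (y k - Y k) • sigmaLor k 1)
      - (∑ k, (y k - Y k) • sigmaLor k 1) * (∑ k, (y k - Y k) • sigmaLor k 3)
    = (y 3 - Y 3) • (∑ k, (y k - Y k) • sigmaLor k 1)
      - (y 1 - Y 1) • (∑ k, (y k - Y k) • sigmaLor k 3)
      - (∑ k, (y k - Y k) ^ 2) • sigmaLor 3 1 := by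
  simp only [Fin.sum_univ_four, e01, e02, e03, e12, e13, e23, e10, e20, e30, e21, e31, e32,
    sL_self, smul_zero, add_zero, zero_add, smul_neg]
  simp only [sub_mul, add_mul, mul_add, mul_sub, smul_mul_assoc, mul_smul_comm, smul_smul,
    p11, p22, p33, p12, p21, p23, p32, p31, p13, neg_mul, mul_neg, smul_neg, neg_smul, neg_neg]
  module

set_option maxHeartbeats 800000 in
lemma cP32 (y Y : Fin 4 → ℝ) :
    (∑ k, (y k - Y k) • sigmaLor k 3) * (∑ k, (y k - Y k) • sigmaLor k 2)
      - (∑ k, (y k - Y k) • sigmaLor k 2) * (∑ k, (y k - Y k) • sigmaLor k 3)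
    = (y 3 - Y 3) • (∑ k, (y k - Y k) • sigmaLor k 2)
      - (y 2 - Y 2) • (∑ k, (y k - Y k) • sigmaLor k 3)
      - (∑ k, (y k - Y k) ^ 2) • sigmaLor 3 2 := by
  simp only [Fin.sum_univ_four, e01, e02, e03, e12, e13, e23, e10, e20, e30, e21, e31, e32,
    sL_self, smul_zero, add_zero, zero_add, smul_neg]
  simp only [sub_mul, add_mul, mul_add, mul_sub, smul_mul_assoc, mul_smul_comm, smul_smul,
    p11, p22, p33, p12, p21, p23, p32, p31, p13, neg_mul, mul_neg, smul_neg, neg_smul, neg_neg]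
  module

set_option maxHeartbeats 800000 in
lemma cP33 (y Y : Fin 4 → ℝ) :
    (∑ k, (y k - Y k) • sigmaLor k 3) * (∑ k, (y k - Y k) • sigmaLor k 3)
      - (∑ k, (y k - Y k) • sigmaLor k 3) * (∑ k, (y k - Y k) • sigmaLor k 3)
    = (y 3 - Y 3) • (∑ k, (y k - Y k) • sigmaLor k 3)
      - (y 3 - Y 3) • (∑ k, (y k - Y k) • sigmaLor k 3)
      - (∑ k, (y k - Y k) ^ 2) • sigmaLor 3 3 := by
  simp [sL_self, sub_self]

set_option maxHeartbeats 1600000 in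
lemma commP (y Y : Fin 4 → ℝ) (m n : Fin 4) :
    (∑ k, (y k - Y k) • sigmaLor k m) * (∑ k, (y k - Y k) • sigmaLor k n)
      - (∑ k, (y k - Y k) • sigmaLor k n) * (∑ k, (y k - Y k) • sigmaLor k m)
    = (y m - Y m) • (∑ k, (y k - Y k) • sigmaLor k n)
      - (y n - Y n) • (∑ k, (y k - Y k) • sigmaLor k m)
      - (∑ k, (y k - Y k) ^ 2) • sigmaLor m n := by
  fin_cases m <;> fin_cases n
  · exact cP00 y Y
  · exact cP01 y Y
  · exact cP02 y Y
  · exact cP03 y Y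
  · exact cP10 y Y
  · exact cP11 y Y
  · exact cP12 y Y
  · exact cP13 y Y
  · exact cP20 y Y
  · exact cP21 y Y
  · exact cP22 y Y
  · exact cP23 y Y
  · exact cP30 y Y
  · exact cP31 y Y
  · exact cP32 y Y
  · exact cP33 y Y

def sgn (a : ℤ) : ℤ := if a < 0 then -1 else if a = 0 then 0 else 1
def E (m n k l : Fin 4) : ℤ :=
  sgn ((n:ℤ)-m) * sgn ((k:ℤ)-m) * sgn ((l:ℤ)-m) *
  sgn ((k:ℤ)-n) * sgn ((l:ℤ)-n) * sgn ((l:ℤ)-k)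

lemma eps4_eq (m n k l : Fin 4) : eps4 m n k l = ((E m n k l : ℤ) : ℝ) := by
  have h : (∑ π : Equiv.Perm (Fin 4),
      if π 0 = m ∧ π 1 = n ∧ π 2 = k ∧ π 3 = l then ((Equiv.Perm.sign π : ℤ)) else 0)
      = E m n k l := by revert m n k l; decide
  rw [eps4, ← h]
  push_cast [apply_ite]
  rfl

lemma fv0 : ((0:Fin 4):ℤ) = 0 := rfl
lemma fv1 : ((1:Fin 4):ℤ) = 1 := rfl
lemma fv2 : ((2:Fin 4):ℤ) = 2 := rfl
lemma fv3 : ((3:Fin 4):ℤ) = 3 := rfl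

set_option maxHeartbeats 800000 in
lemma dQ00 : (∑ k, ∑ l, eps4 0 0 k l • sigmaLor k l) = (2:ℝ) • sigmaLor 0 0 := by
  simp only [Fin.sum_univ_four]
  norm_num [eps4_eq, E, sgn, fv0, fv1, fv2, fv3,
    e01, e02, e03, e12, e13, e23, e10, e20, e30, e21, e31, e32, sL_self]
  try module

set_option maxHeartbeats 800000 in
lemma dQ01 : (∑ k, ∑ l, eps4 0 1 k l • sigmaLor k l) = (2:ℝ) • sigmaLor 0 1 := by
  simp only [Fin.sum_univ_four]
  norm_num [eps4_eq, E, sgn, fv0, fv1, fv2, fv3,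
    e01, e02, e03, e12, e13, e23, e10, e20, e30, e21, e31, e32, sL_self]
  try module

set_option maxHeartbeats 800000 in
lemma dQ02 : (∑ k, ∑ l, eps4 0 2 k l • sigmaLor k l) = (2:ℝ) • sigmaLor 0 2 := by
  simp only [Fin.sum_univ_four]
  norm_num [eps4_eq, E, sgn, fv0, fv1, fv2, fv3,
    e01, e02, e03, e12, e13, e23, e10, e20, e30, e21, e31, e32, sL_self]
  try module

set_option maxHeartbeats 800000 in
lemma dQ03 : (∑ k, ∑ l, eps4 0 3 k l • sigmaLor k l) = (2:ℝ) • sigmaLor 0 3 := by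
  simp only [Fin.sum_univ_four]
  norm_num [eps4_eq, E, sgn, fv0, fv1, fv2, fv3,
    e01, e02, e03, e12, e13, e23, e10, e20, e30, e21, e31, e32, sL_self]
  try module

set_option maxHeartbeats 800000 in
lemma dQ10 : (∑ k, ∑ l, eps4 1 0 k l • sigmaLor k l) = (2:ℝ) • sigmaLor 1 0 := by
  simp only [Fin.sum_univ_four]
  norm_num [eps4_eq, E, sgn, fv0, fv1, fv2, fv3,
    e01, e02, e03, e12, e13, e23, e10, e20, e30, e21, e31, e32, sL_self]
  try module

set_option maxHeartbeats 800000 in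
lemma dQ11 : (∑ k, ∑ l, eps4 1 1 k l • sigmaLor k l) = (2:ℝ) • sigmaLor 1 1 := by
  simp only [Fin.sum_univ_four]
  norm_num [eps4_eq, E, sgn, fv0, fv1, fv2, fv3,
    e01, e02, e03, e12, e13, e23, e10, e20, e30, e21, e31, e32, sL_self]
  try module

set_option maxHeartbeats 800000 in
lemma dQ12 : (∑ k, ∑ l, eps4 1 2 k l • sigmaLor k l) = (2:ℝ) • sigmaLor 1 2 := by
  simp only [Fin.sum_univ_four]
  norm_num [eps4_eq, E, sgn, fv0, fv1, fv2, fv3,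
    e01, e02, e03, e12, e13, e23, e10, e20, e30, e21, e31, e32, sL_self]
  try module

set_option maxHeartbeats 800000 in
lemma dQ13 : (∑ k, ∑ l, eps4 1 3 k l • sigmaLor k l) = (2:ℝ) • sigmaLor 1 3 := by
  simp only [Fin.sum_univ_four]
  norm_num [eps4_eq, E, sgn, fv0, fv1, fv2, fv3,
    e01, e02, e03, e12, e13, e23, e10, e20, e30, e21, e31, e32, sL_self]
  try module

set_option maxHeartbeats 800000 in
lemma dQ20 : (∑ k, ∑ l, eps4 2 0 k l • sigmaLor k l) = (2:ℝ) • sigmaLor 2 0 := by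
  simp only [Fin.sum_univ_four]
  norm_num [eps4_eq, E, sgn, fv0, fv1, fv2, fv3,
    e01, e02, e03, e12, e13, e23, e10, e20, e30, e21, e31, e32, sL_self]
  try module

set_option maxHeartbeats 800000 in
lemma dQ21 : (∑ k, ∑ l, eps4 2 1 k l • sigmaLor k l) = (2:ℝ) • sigmaLor 2 1 := by
  simp only [Fin.sum_univ_four]
  norm_num [eps4_eq, E, sgn, fv0, fv1, fv2, fv3,
    e01, e02, e03, e12, e13, e23, e10, e20, e30, e21, e31, e32, sL_self]
  try module

set_option maxHeartbeats 800000 in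
lemma dQ22 : (∑ k, ∑ l, eps4 2 2 k l • sigmaLor k l) = (2:ℝ) • sigmaLor 2 2 := by
  simp only [Fin.sum_univ_four]
  norm_num [eps4_eq, E, sgn, fv0, fv1, fv2, fv3,
    e01, e02, e03, e12, e13, e23, e10, e20, e30, e21, e31, e32, sL_self]
  try module

set_option maxHeartbeats 800000 in
lemma dQ23 : (∑ k, ∑ l, eps4 2 3 k l • sigmaLor k l) = (2:ℝ) • sigmaLor 2 3 := by
  simp only [Fin.sum_univ_four]
  norm_num [eps4_eq, E, sgn, fv0, fv1, fv2, fv3,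
    e01, e02, e03, e12, e13, e23, e10, e20, e30, e21, e31, e32, sL_self]
  try module

set_option maxHeartbeats 800000 in
lemma dQ30 : (∑ k, ∑ l, eps4 3 0 k l • sigmaLor k l) = (2:ℝ) • sigmaLor 3 0 := by
  simp only [Fin.sum_univ_four]
  norm_num [eps4_eq, E, sgn, fv0, fv1, fv2, fv3,
    e01, e02, e03, e12, e13, e23, e10, e20, e30, e21, e31, e32, sL_self]
  try module

set_option maxHeartbeats 800000 in
lemma dQ31 : (∑ k, ∑ l, eps4 3 1 k l • sigmaLor k l) = (2:ℝ) • sigmaLor 3 1 := by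
  simp only [Fin.sum_univ_four]
  norm_num [eps4_eq, E, sgn, fv0, fv1, fv2, fv3,
    e01, e02, e03, e12, e13, e23, e10, e20, e30, e21, e31, e32, sL_self]
  try module

set_option maxHeartbeats 800000 in
lemma dQ32 : (∑ k, ∑ l, eps4 3 2 k l • sigmaLor k l) = (2:ℝ) • sigmaLor 3 2 := by
  simp only [Fin.sum_univ_four]
  norm_num [eps4_eq, E, sgn, fv0, fv1, fv2, fv3,
    e01, e02, e03, e12, e13, e23, e10, e20, e30, e21, e31, e32, sL_self]
  try module

set_option maxHeartbeats 800000 in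
lemma dQ33 : (∑ k, ∑ l, eps4 3 3 k l • sigmaLor k l) = (2:ℝ) • sigmaLor 3 3 := by
  simp only [Fin.sum_univ_four]
  norm_num [eps4_eq, E, sgn, fv0, fv1, fv2, fv3,
    e01, e02, e03, e12, e13, e23, e10, e20, e30, e21, e31, e32, sL_self]
  try module

set_option maxHeartbeats 800000 in
lemma eps_sum (m n : Fin 4) :
    (∑ k, ∑ l, eps4 m n k l • sigmaLor k l) = (2:ℝ) • sigmaLor m n := by
  fin_cases m <;> fin_cases n
  · exact dQ00
  · exact dQ01
  · exact dQ02
  · exact dQ03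
  · exact dQ10
  · exact dQ11
  · exact dQ12
  · exact dQ13
  · exact dQ20
  · exact dQ21
  · exact dQ22
  · exact dQ23
  · exact dQ30
  · exact dQ31
  · exact dQ32
  · exact dQ33

lemma pder_main (g Λ : ℝ) (hg : g ≠ 0) (hΛ : Λ ≠ 0) (Y y : Fin 4 → ℝ) (m : Fin 4) (c : Fin 4 → ℂ) :
    pder m (fun z => (2 / (g * ((∑ k, (z k - Y k) ^ 2) + Λ ^ 2))) • ∑ k, (z k - Y k) • c k) y
    = (-4 * (y m - Y m) / (g * ((∑ k, (y k - Y k) ^ 2) + Λ ^ 2) ^ 2)) • ∑ k, (y k - Y k) • c k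
      + (2 / (g * ((∑ k, (y k - Y k) ^ 2) + Λ ^ 2))) • c m := by
  have hC : (0:ℝ) ≤ ∑ k ∈ Finset.univ.erase m, (y k - Y k) ^ 2 :=
    Finset.sum_nonneg fun k _ => sq_nonneg _
  set C : ℝ := ∑ k ∈ Finset.univ.erase m, (y k - Y k) ^ 2 with hCdef
  set D : ℂ := ∑ k ∈ Finset.univ.erase m, (y k - Y k) • c k with hDdef
  have hsum1 : ∀ t : ℝ, (∑ k, (Function.update y m t k - Y k) ^ 2) = (t - Y m) ^ 2 + C := by
    intro t
    rw [hCdef, ← Finset.add_sum_erase _ _ (Finset.mem_univ m), Function.update_self]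
    congr 1
    exact Finset.sum_congr rfl fun k hk => by
      rw [Function.update_of_ne (Finset.ne_of_mem_erase hk)]
  have hsum2 : ∀ t : ℝ, (∑ k, (Function.update y m t k - Y k) • c k) = (t - Y m) • c m + D := by
    intro t
    rw [hDdef, ← Finset.add_sum_erase _ _ (Finset.mem_univ m), Function.update_self]
    congr 1
    exact Finset.sum_congr rfl fun k hk => by
      rw [Function.update_of_ne (Finset.ne_of_mem_erase hk)]
  have hy1 : (∑ k, (y k - Y k) ^ 2) = (y m - Y m) ^ 2 + C := by
    have := hsum1 (y m); rwa [Function.update_eq_self] at this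
  have hy2 : (∑ k, (y k - Y k) • c k) = (y m - Y m) • c m + D := by
    have := hsum2 (y m); rwa [Function.update_eq_self] at this
  have hupos : (0:ℝ) < (y m - Y m) ^ 2 + C + Λ ^ 2 := by
    have h2 : (0:ℝ) < Λ ^ 2 := pow_pos (abs_pos.mpr hΛ) 2 |>.trans_eq (by rw [sq_abs])
    nlinarith [sq_nonneg (y m - Y m)]
  have hne : g * ((y m - Y m) ^ 2 + C + Λ ^ 2) ≠ 0 := mul_ne_zero hg (ne_of_gt hupos)
  set t₀ := y m
  have hq : HasDerivAt (fun t : ℝ => g * ((t - Y m) ^ 2 + (C + Λ ^ 2)))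
      (g * (2 * (t₀ - Y m))) t₀ := by
    have h1 : HasDerivAt (fun t : ℝ => (t - Y m) ^ 2) (2 * (t₀ - Y m)) t₀ := by
      simpa using (((hasDerivAt_id t₀).sub_const (Y m)).fun_pow 2)
    exact (h1.add_const (C + Λ ^ 2)).const_mul g
  have hs : HasDerivAt (fun t : ℝ => 2 / (g * ((t - Y m) ^ 2 + (C + Λ ^ 2))))
      ((0 * (g * ((t₀ - Y m) ^ 2 + (C + Λ ^ 2))) - 2 * (g * (2 * (t₀ - Y m))))
        / (g * ((t₀ - Y m) ^ 2 + (C + Λ ^ 2))) ^ 2) t₀ :=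
    (hasDerivAt_const t₀ (2:ℝ)).div hq (by rw [← add_assoc]; exact hne)
  have hL : HasDerivAt (fun t : ℝ => (t - Y m) • c m + D) ((1:ℝ) • c m) t₀ :=
    (((hasDerivAt_id t₀).sub_const (Y m)).smul_const (c m)).add_const D
  have hder := hs.fun_smul hL
  have hfun : (fun t : ℝ =>
      (2 / (g * ((∑ k, (Function.update y m t k - Y k) ^ 2) + Λ ^ 2))) •
        ∑ k, (Function.update y m t k - Y k) • c k)
      = fun t : ℝ => (2 / (g * ((t - Y m) ^ 2 + (C + Λ ^ 2)))) • ((t - Y m) • c m + D) := by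
    funext t; rw [hsum1, hsum2, add_assoc]
  rw [pder]
  simp only [hfun]
  rw [hder.deriv, hy1, hy2]
  match_scalars <;> field_simp <;> ring

set_option maxHeartbeats 1600000 in
lemma bpstF_eq (g Λ : ℝ) (hg : g ≠ 0) (hΛ : Λ ≠ 0) (Y y : Fin 4 → ℝ) (m n : Fin 4) :
    bpstF g Λ Y y m n =
      (4 * Λ ^ 2 / (g * ((∑ k, (y k - Y k) ^ 2) + Λ ^ 2) ^ 2)) • sigmaLor m n := by
  have hupos : (0:ℝ) < (∑ k, (y k - Y k) ^ 2) + Λ ^ 2 := by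
    have h2 : (0:ℝ) < Λ ^ 2 := pow_pos (abs_pos.mpr hΛ) 2 |>.trans_eq (by rw [sq_abs])
    have h3 : (0:ℝ) ≤ ∑ k, (y k - Y k) ^ 2 := Finset.sum_nonneg fun k _ => sq_nonneg _
    linarith
  have hune : ((∑ k, (y k - Y k) ^ 2) + Λ ^ 2) ≠ 0 := ne_of_gt hupos
  have hpd : ∀ (q p : Fin 4) (i j : Fin 2),
      pder q (fun z => bpstA g Λ Y z p i j) y =
      ((-4 * (y q - Y q) / (g * ((∑ k, (y k - Y k) ^ 2) + Λ ^ 2) ^ 2)) •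
          (∑ k, (y k - Y k) • sigmaLor k p)
        + (2 / (g * ((∑ k, (y k - Y k) ^ 2) + Λ ^ 2))) • sigmaLor q p) i j := by
    intro q p i j
    have hfun : (fun z => bpstA g Λ Y z p i j)
        = fun z => (2 / (g * ((∑ k, (z k - Y k) ^ 2) + Λ ^ 2))) •
            ∑ k, (z k - Y k) • sigmaLor k p i j := by
      funext z
      simp [bpstA, Matrix.smul_apply, Matrix.sum_apply]
    rw [hfun]
    simp only [pder_main g Λ hg hΛ Y y q (fun k => sigmaLor k p i j)]
    simp [Matrix.add_apply, Matrix.smul_apply, Matrix.sum_apply]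
  have hD : (Matrix.of fun i j : Fin 2 =>
        pder m (fun z => bpstA g Λ Y z n i j) y - pder n (fun z => bpstA g Λ Y z m i j) y)
      = ((-4 * (y m - Y m) / (g * ((∑ k, (y k - Y k) ^ 2) + Λ ^ 2) ^ 2)) •
            (∑ k, (y k - Y k) • sigmaLor k n)
          + (2 / (g * ((∑ k, (y k - Y k) ^ 2) + Λ ^ 2))) • sigmaLor m n)
        - ((-4 * (y n - Y n) / (g * ((∑ k, (y k - Y k) ^ 2) + Λ ^ 2) ^ 2)) •
            (∑ k, (y k - Y k) • sigmaLor k m)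
          + (2 / (g * ((∑ k, (y k - Y k) ^ 2) + Λ ^ 2))) • sigmaLor n m) := by
    ext i j
    simp only [Matrix.of_apply, Matrix.sub_apply]
    rw [hpd m n i j, hpd n m i j]
  rw [bpstF, hD]
  simp only [bpstA]
  simp only [smul_mul_assoc, mul_smul_comm, smul_smul]
  rw [← smul_sub, commP y Y m n, sL_anti n m]
  match_scalars <;> field_simp <;> ring

end BPSTAux

/-- **BPST field strength and self-duality.** For the BPST instanton,
`F_{mn}(y) = (4Λ²/(g(‖y−Y‖²+Λ²)²)) σ_{mn}`, and `F` is self-dual: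
`(1/2) Σ_{k,l} ε(m,n,k,l) F_{kl}(y) = F_{mn}(y)`. -/
theorem bpst_field_strength_self_dual (g Λ : ℝ) (hg : 0 < g) (hΛ : Λ ≠ 0)
    (Y y : Fin 4 → ℝ) (m n : Fin 4) :
    bpstF g Λ Y y m n =
      (4 * Λ ^ 2 / (g * ((∑ k, (y k - Y k) ^ 2) + Λ ^ 2) ^ 2)) • sigmaLor m n ∧
    (1 / 2 : ℝ) • ∑ k, ∑ l, eps4 m n k l • bpstF g Λ Y y k l = bpstF g Λ Y y m n := by
  have hgne : g ≠ 0 := ne_of_gt hg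
  constructor
  · exact bpstF_eq g Λ hgne hΛ Y y m n
  · have hF : ∀ k l : Fin 4, bpstF g Λ Y y k l =
        (4 * Λ ^ 2 / (g * ((∑ k, (y k - Y k) ^ 2) + Λ ^ 2) ^ 2)) • sigmaLor k l :=
      fun k l => bpstF_eq g Λ hgne hΛ Y y k l
    simp only [hF]
    have hsw : ∀ k l : Fin 4, eps4 m n k l •
        ((4 * Λ ^ 2 / (g * ((∑ k, (y k - Y k) ^ 2) + Λ ^ 2) ^ 2)) • sigmaLor k l)
        = (4 * Λ ^ 2 / (g * ((∑ k, (y k - Y k) ^ 2) + Λ ^ 2) ^ 2)) •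
          (eps4 m n k l • sigmaLor k l) := fun k l => smul_comm _ _ _
    simp only [hsw, ← Finset.smul_sum]
    rw [eps_sum m n, smul_smul, smul_smul]
    congr 1
    ring
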